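/- Delsarte's theorem: for a linear code C ⊆ F_{q^t}^n, the dual over F_q of its subfield subcode equals the trace code of its dual: (C ∩ F_q^n)^⊥ = tr(C^⊥), where duality on the left is taken inside F_q^n. -/

import Mathlib

open Finset LinearMap

/-- The dot-product bilinear form on `Fin n → F`. -/
def dotForm (F : Type*) [Field F] (n : ℕ) : LinearMap.BilinForm F (Fin n → F) :=
  LinearMap.mk₂ F (fun x y => ∑ i, x i * y i)
    (by intro x x' y; simp [add_mul, Finset.sum_add_distrib])
    (by intro a x y; simp [Finset.mul_sum, mul_assoc])
    (by intro x y y'; simp [mul_add, Finset.sum_add_distrib])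
    (by intro a x y; simp [Finset.mul_sum, mul_left_comm])

lemma dotForm_apply {F : Type*} [Field F] {n : ℕ} (x y : Fin n → F) :
    dotForm F n x y = ∑ i, x i * y i := rfl

lemma dotForm_isRefl (F : Type*) [Field F] (n : ℕ) : (dotForm F n).IsRefl := by
  intro x y h
  simpa [dotForm_apply, mul_comm] using h

lemma dotForm_nondegenerate (F : Type*) [Field F] (n : ℕ) : (dotForm F n).Nondegenerate := by
  refine ⟨fun x hx => ?_, fun x hx => ?_⟩ <;>
  · funext j
    have := hx (Pi.single j 1)
    simpa [dotForm_apply, Pi.single_apply, mul_ite, ite_mul] using this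

theorem stmt_9 {Fq K : Type*} [Field Fq] [Field K] [Fintype Fq] [Fintype K]
    [Algebra Fq K] (n : ℕ) (C : Submodule K (Fin n → K)) :
    {w : Fin n → Fq | ∀ c : Fin n → Fq,
        (fun i => algebraMap Fq K (c i)) ∈ C → ∑ i, w i * c i = 0} =
    {w | ∃ v : Fin n → K, (∀ c ∈ C, ∑ i, v i * c i = 0) ∧
        ∀ i, w i = Algebra.trace Fq K (v i)} := by
  classical
  -- instances
  haveI : Module.Finite Fq K := Module.Finite.of_finite
  -- the embedding of Fq^n into K^n
  set e : (Fin n → Fq) →ₗ[Fq] (Fin n → K) :=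
    LinearMap.pi (fun i => (Algebra.linearMap Fq K).comp (LinearMap.proj i)) with he
  have e_apply : ∀ (c : Fin n → Fq) i, e c i = algebraMap Fq K (c i) := fun _ _ => rfl
  -- the trace map K^n → Fq^n
  set tr : (Fin n → K) →ₗ[Fq] (Fin n → Fq) :=
    LinearMap.pi (fun i => (Algebra.trace Fq K).comp (LinearMap.proj i)) with htr
  have tr_apply : ∀ (v : Fin n → K) i, tr v i = Algebra.trace Fq K (v i) := fun _ _ => rfl
  -- subfield subcode
  set S : Submodule Fq (Fin n → Fq) := Submodule.comap e (C.restrictScalars Fq) with hS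
  -- dual code of C over K
  set D : Submodule K (Fin n → K) := (dotForm K n).orthogonal C with hD
  -- trace code of D
  set T : Submodule Fq (Fin n → Fq) := Submodule.map tr (D.restrictScalars Fq) with hT
  -- key: the orthogonal of T equals S
  have key : (dotForm Fq n).orthogonal T = S := by
    ext w
    simp only [LinearMap.BilinForm.mem_orthogonal_iff, hT, Submodule.mem_map,
      Submodule.restrictScalars_mem, LinearMap.BilinForm.IsOrtho]
    constructor
    · intro h
      -- w orthogonal to all traces ⇒ e w ∈ C
      have hEW : e w ∈ (dotForm K n).orthogonal D := by
        intro v hv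
        -- for all α : K, tr (α * ∑ᵢ vᵢ * (e w)ᵢ) = 0
        have hx : ∀ α : K, Algebra.trace Fq K (α * ∑ i, v i * e w i) = 0 := by
          intro α
          have hαv : α • v ∈ D := Submodule.smul_mem D α hv
          have h0 := h (tr (α • v)) ⟨α • v, hαv, rfl⟩
          rw [dotForm_apply] at h0
          calc Algebra.trace Fq K (α * ∑ i, v i * e w i)
              = ∑ i, Algebra.trace Fq K (w i • (α * v i)) := by
                rw [Finset.mul_sum, map_sum]
                congr 1; ext i
                congr 1
                rw [Algebra.smul_def, e_apply]
                ring
            _ = ∑ i, tr (α • v) i * w i := by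
                congr 1; ext i
                rw [map_smul, tr_apply, smul_eq_mul, Pi.smul_apply, smul_eq_mul, mul_comm]
            _ = 0 := h0
        have hker : (∑ i, v i * e w i) = 0 := by
          by_contra hne
          have := (traceForm_nondegenerate Fq K).1 (∑ i, v i * e w i) (fun α => by
            rw [Algebra.traceForm_apply, mul_comm]; exact hx α)
          exact hne this
        rw [dotForm_apply, hker]
      rw [(dotForm K n).orthogonal_orthogonal (dotForm_nondegenerate K n)
        (dotForm_isRefl K n) C] at hEW
      exact hEW
    · intro hw v
      rintro ⟨u, hu, rfl⟩
      have h0 : (∑ i, e w i * u i) = 0 := hu (e w) hw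
      rw [dotForm_apply]
      calc ∑ i, tr u i * w i = Algebra.trace Fq K (∑ i, e w i * u i) := by
            rw [map_sum]
            congr 1; ext i
            rw [tr_apply, e_apply]
            have h1 : algebraMap Fq K (w i) * u i = w i • u i := (Algebra.smul_def _ _).symm
            rw [h1, map_smul, smul_eq_mul, mul_comm]
        _ = 0 := by rw [h0, map_zero]
  -- conclude by taking orthogonals
  have main : (dotForm Fq n).orthogonal S = T := by
    rw [← key, (dotForm Fq n).orthogonal_orthogonal (dotForm_nondegenerate Fq n)
      (dotForm_isRefl Fq n)]
  ext w
  simp only [Set.mem_setOf_eq]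
  constructor
  · intro h
    have hw : w ∈ (dotForm Fq n).orthogonal S := by
      intro c hc
      rw [dotForm_apply]
      have := h c hc
      rw [← this]
      exact Finset.sum_congr rfl fun i _ => mul_comm _ _
    rw [main] at hw
    obtain ⟨v, hv, rfl⟩ := hw
    exact ⟨v, fun c hc => by
      have := hv c hc
      rw [dotForm_apply] at this
      rw [← this]
      exact Finset.sum_congr rfl fun i _ => mul_comm _ _, fun i => rfl⟩
  · rintro ⟨v, hv, hwv⟩ c hc
    have hvD : v ∈ D := by
      intro x hx
      rw [dotForm_apply, ← hv x hx]
      exact Finset.sum_congr rfl fun i _ => mul_comm _ _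
    have hwT : w ∈ T := ⟨v, hvD, by funext i; rw [tr_apply, hwv i]⟩
    rw [← main] at hwT
    have := hwT c hc
    rw [dotForm_apply] at this
    rw [← this]
    exact Finset.sum_congr rfl fun i _ => mul_comm _ _
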